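/- Suppose Γ ⊆ ℂ* has the weighted sum property. Then for every n ≥ 1, the set Σ_n(±Γ) of sums of at most n elements of ±Γ does not contain arbitrarily long arithmetic progressions whose common difference is a positive integer. -/

import Mathlib

/-- `±Γ = Γ ∪ (-Γ)`. -/
def pmSet (Γ : Set ℂ) : Set ℂ := Γ ∪ (-Γ)

/-- Solutions in `(±Γ)^k` of `x_1 + ... + x_k = r` with all proper nonempty partial
sums nonzero. -/
def SolSet (Γ : Set ℂ) (k : ℕ) (r : ℤ) : Set (Fin k → ℂ) :=
  {x | (∀ i, x i ∈ pmSet Γ) ∧ (∑ i, x i) = (r : ℂ) ∧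
    ∀ I : Finset (Fin k), I.Nonempty → I ≠ Finset.univ → ∑ i ∈ I, x i ≠ 0}

/-- The weighted sum property. -/
def WSP (Γ : Set ℂ) : Prop :=
  ∀ k : ℕ, 1 ≤ k → ∃ n : ℕ, ∀ r : ℤ, 0 < r →
    (SolSet Γ k r).Finite ∧ (SolSet Γ k r).ncard ≤ n

/-- `Σ_n(±Γ)`: sums of at most `n` elements of `±Γ`. -/
def SigmaPMC (Γ : Set ℂ) (n : ℕ) : Set ℂ :=
  {z | ∃ k ≤ n, ∃ x : Fin k → ℂ, (∀ i, x i ∈ pmSet Γ) ∧ z = ∑ i, x i}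

section Auxiliary

open Finset Filter

lemma exists_min_subsum (G : Finset ℕ) (x : ℕ → ℂ) (r : ℂ)
    (h : ∑ i ∈ G, x i = r) :
    ∃ S : Finset ℕ, S ⊆ G ∧ ∑ i ∈ S, x i = r ∧
      ∀ T ⊆ S, T.Nonempty → T ≠ S → ∑ i ∈ T, x i ≠ 0 := by
  classical
  set 𝒮 := G.powerset.filter (fun S => ∑ i ∈ S, x i = r) with h𝒮
  have hne : 𝒮.Nonempty := ⟨G, by simp [h𝒮, h]⟩
  obtain ⟨S, hS, hmin⟩ := Finset.exists_min_image 𝒮 Finset.card hne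
  simp only [h𝒮, Finset.mem_filter, Finset.mem_powerset] at hS
  refine ⟨S, hS.1, hS.2, ?_⟩
  intro T hT hTne hTS hT0
  have hsum' : ∑ i ∈ S \ T, x i = r := by
    have := Finset.sum_sdiff (f := x) hT
    rw [hT0, add_zero] at this; rw [this, hS.2]
  have hmem : S \ T ∈ 𝒮 := by
    simp only [h𝒮, Finset.mem_filter, Finset.mem_powerset]
    exact ⟨Finset.sdiff_subset.trans hS.1, hsum'⟩
  have hcard : (S \ T).card < S.card :=
    Finset.card_lt_card (Finset.sdiff_ssubset hT hTne)
  exact absurd (hmin _ hmem) (by omega)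

lemma sum_orderEmb (S : Finset ℕ) {kk : ℕ} (h : S.card = kk) (f : ℕ → ℂ) :
    ∑ j : Fin kk, f (S.orderEmbOfFin h j) = ∑ i ∈ S, f i := by
  classical
  rw [← Finset.sum_image (f := f) (g := fun j => S.orderEmbOfFin h j) (s := Finset.univ)
      (fun a _ b _ hab => (S.orderEmbOfFin h).injective hab)]
  congr 1
  apply Finset.coe_injective
  rw [Finset.coe_image, Finset.coe_univ, Set.image_univ, Finset.range_orderEmbOfFin]

lemma pm_neg {Γ : Set ℂ} {w : ℂ} (hw : w ∈ pmSet Γ) : -w ∈ pmSet Γ := by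
  rcases hw with h | h
  · right; simpa using h
  · left; simpa using h

/-- membership in `SigmaPMC` from a finset-indexed sum -/
lemma mem_sigma {Γ : Set ℂ} {m : ℕ} (S : Finset ℕ) (x : ℕ → ℂ) (hc : S.card ≤ m)
    (hm : ∀ i ∈ S, x i ∈ pmSet Γ) : ∑ i ∈ S, x i ∈ SigmaPMC Γ m := by
  refine ⟨S.card, hc, fun j => x (S.orderEmbOfFin rfl j),
    fun j => hm _ (S.orderEmbOfFin_mem rfl j), (sum_orderEmb S rfl x).symm⟩

/-- good (zero-subsum-free) representations of nonzero elements -/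
lemma exists_goodRep {Γ : Set ℂ} {m : ℕ} {z : ℂ} (hz : z ∈ SigmaPMC Γ m) (h0 : z ≠ 0) :
    ∃ k : ℕ, 1 ≤ k ∧ k ≤ m ∧ ∃ x : ℕ → ℂ, (∀ i < k, x i ∈ pmSet Γ) ∧
      (∑ i ∈ Finset.range k, x i = z) ∧
      ∀ T ⊆ Finset.range k, T.Nonempty → ∑ i ∈ T, x i ≠ 0 := by
  classical
  obtain ⟨k0, hk0, y, hy, hsum⟩ := hz
  set y' : ℕ → ℂ := fun i => if h : i < k0 then y ⟨i, h⟩ else 0 with hy'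
  have hsum' : ∑ i ∈ Finset.range k0, y' i = z := by
    rw [hsum, ← Fin.sum_univ_eq_sum_range]
    apply Finset.sum_congr rfl
    intro j _
    simp [hy', j.isLt]
  obtain ⟨S, hSsub, hSsum, hSmin⟩ := exists_min_subsum (Finset.range k0) y' z hsum'
  have hSne : S.Nonempty := Finset.nonempty_of_sum_ne_zero (by rw [hSsum]; exact h0)
  have hSmin' : ∀ T ⊆ S, T.Nonempty → ∑ i ∈ T, y' i ≠ 0 := by
    intro T hT hTne
    by_cases hTS : T = S
    · subst hTS; rw [hSsum]; exact h0
    · exact hSmin T hT hTne hTS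
  set kk := S.card with hkk
  set e : ℕ → ℕ := fun i => if h : i < kk then S.orderEmbOfFin rfl ⟨i, h⟩ else 0 with he
  have hemem : ∀ i < kk, e i ∈ S := by
    intro i hi; simp only [he, dif_pos hi]; exact S.orderEmbOfFin_mem rfl _
  have heinj : ∀ i < kk, ∀ j < kk, e i = e j → i = j := by
    intro i hi j hj hij
    simp only [he, dif_pos hi, dif_pos hj] at hij
    have := (S.orderEmbOfFin rfl).injective hij
    simpa using this
  refine ⟨kk, Finset.card_pos.mpr hSne, hkk ▸ (Finset.card_le_card hSsub).trans (by simpa using hk0),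
    fun i => y' (e i), ?_, ?_, ?_⟩
  · intro i hi
    have hmem := hemem i hi
    have : e i < k0 := Finset.mem_range.mp (hSsub hmem)
    simp only [hy', dif_pos this]
    exact hy _
  · rw [← Fin.sum_univ_eq_sum_range]
    have : ∀ j : Fin kk, y' (e j) = y' (S.orderEmbOfFin rfl j) := by
      intro j; simp [he, j.isLt]
    rw [Finset.sum_congr rfl (fun j _ => this j), sum_orderEmb S rfl y', hSsum]
  · intro T hT hTne
    have hinj : ∀ a ∈ T, ∀ b ∈ T, e a = e b → a = b := by
      intro a ha b hb
      exact heinj a (Finset.mem_range.mp (hT ha)) b (Finset.mem_range.mp (hT hb))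
    have : ∑ i ∈ T, y' (e i) = ∑ i ∈ T.image e, y' i := (Finset.sum_image hinj).symm
    rw [this]
    apply hSmin'
    · intro i hi
      obtain ⟨a, ha, rfl⟩ := Finset.mem_image.mp hi
      exact hemem a (Finset.mem_range.mp (hT ha))
    · exact hTne.image e

/-- The set of "placed" irreducible solutions on a fixed index set `S` is finite,
with cardinality bounded by that of `SolSet`. -/
lemma placed_finite (Γ : Set ℂ) (d : ℤ) (S : Finset ℕ) (N : ℕ)
    (hfin : (SolSet Γ S.card d).Finite) (hN : (SolSet Γ S.card d).ncard ≤ N) :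
    ({y : ℕ → ℂ | (∀ i ∈ S, y i ∈ pmSet Γ) ∧ (∀ i ∉ S, y i = 0) ∧
      (∑ i ∈ S, y i = (d : ℂ)) ∧
      ∀ T ⊆ S, T.Nonempty → T ≠ S → ∑ i ∈ T, y i ≠ 0}).Finite ∧
    ({y : ℕ → ℂ | (∀ i ∈ S, y i ∈ pmSet Γ) ∧ (∀ i ∉ S, y i = 0) ∧
      (∑ i ∈ S, y i = (d : ℂ)) ∧
      ∀ T ⊆ S, T.Nonempty → T ≠ S → ∑ i ∈ T, y i ≠ 0}).ncard ≤ N := by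
  classical
  set 𝒢 := ({y : ℕ → ℂ | (∀ i ∈ S, y i ∈ pmSet Γ) ∧ (∀ i ∉ S, y i = 0) ∧
      (∑ i ∈ S, y i = (d : ℂ)) ∧
      ∀ T ⊆ S, T.Nonempty → T ≠ S → ∑ i ∈ T, y i ≠ 0}) with h𝒢
  set Φ : (ℕ → ℂ) → (Fin S.card → ℂ) := fun y j => y (S.orderEmbOfFin rfl j) with hΦ
  have himg : Φ '' 𝒢 ⊆ SolSet Γ S.card d := by
    rintro - ⟨y, hy, rfl⟩
    obtain ⟨hy1, hy2, hy3, hy4⟩ := hy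
    refine ⟨fun j => hy1 _ (S.orderEmbOfFin_mem rfl j), ?_, ?_⟩
    · rw [show (∑ j, Φ y j) = ∑ j : Fin S.card, y (S.orderEmbOfFin rfl j) from rfl,
        sum_orderEmb S rfl y]; exact hy3
    · intro I hI hIu
      have hinj : ∀ a ∈ I, ∀ b ∈ I, S.orderEmbOfFin rfl a = S.orderEmbOfFin rfl b → a = b :=
        fun a _ b _ hab => (S.orderEmbOfFin rfl).injective hab
      have : ∑ j ∈ I, Φ y j = ∑ i ∈ I.image (fun j => S.orderEmbOfFin rfl j), y i :=
        (Finset.sum_image hinj).symm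
      rw [this]
      apply hy4
      · intro i hi
        obtain ⟨a, _, rfl⟩ := Finset.mem_image.mp hi
        exact S.orderEmbOfFin_mem rfl a
      · exact hI.image _
      · intro hc
        have h1 : (I.image (fun j => S.orderEmbOfFin rfl j)).card = I.card :=
          Finset.card_image_of_injOn (fun a ha b hb => hinj a ha b hb)
        have h2 : I.card < S.card := by
          have : I ⊂ Finset.univ := Finset.ssubset_univ_iff.mpr hIu
          simpa using Finset.card_lt_card this
        have h3 := congrArg Finset.card hc
        rw [h1] at h3; omega
  have hinjOn : Set.InjOn Φ 𝒢 := by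
    intro y hy y' hy' heq
    funext i
    by_cases hi : i ∈ S
    · have : i ∈ Set.range (S.orderEmbOfFin rfl) := by
        rw [Finset.range_orderEmbOfFin]; exact hi
      obtain ⟨j, rfl⟩ := this
      exact congrFun heq j
    · rw [hy.2.1 i hi, hy'.2.1 i hi]
  have hfin' : 𝒢.Finite := Set.Finite.of_finite_image (hfin.subset himg) hinjOn
  refine ⟨hfin', ?_⟩
  calc 𝒢.ncard = (Φ '' 𝒢).ncard := (Set.ncard_image_of_injOn hinjOn).symm
    _ ≤ (SolSet Γ S.card d).ncard := Set.ncard_le_ncard himg hfin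
    _ ≤ N := hN

/-- Finitary van der Waerden, for colorings taking values in a fixed finite set,
derived from the infinitary version by ultrafilter compactness. -/
lemma fvdw {κ : Type} (A : Set κ) (hA : A.Finite) (l : ℕ) :
    ∃ W : ℕ, ∀ C : ℕ → κ, (∀ i, C i ∈ A) →
      ∃ a, 0 < a ∧ ∃ b, a * (l - 1) + b < W ∧ ∀ i < l, C (b + a * i) = C b := by
  classical
  by_contra hcon
  push_neg at hcon
  choose C hCA hbad using hcon
  rcases Nat.eq_zero_or_pos l with rfl | hl
  · obtain ⟨i, hi, -⟩ := hbad 1 1 one_pos 0 (by norm_num)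
    omega
  set U := Filter.hyperfilter ℕ with hU
  have hlim : ∀ s : ℕ, ∃ c ∈ A, {W | C W s = c} ∈ U := by
    intro s
    have hsub : (Set.univ : Set ℕ) ⊆ ⋃ c ∈ A, {W | C W s = c} :=
      fun W _ => Set.mem_biUnion (hCA W s) rfl
    have huniv : (⋃ c ∈ A, {W | C W s = c}) ∈ U :=
      Filter.mem_of_superset Filter.univ_mem hsub
    exact (Ultrafilter.finite_biUnion_mem_iff hA).1 huniv
  choose χ hχA hχU using hlim
  haveI : Finite ↥A := hA.to_subtype
  obtain ⟨a, ha, b, c, hmono⟩ :=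
    Combinatorics.exists_mono_homothetic_copy (Finset.range l)
      (fun s => (⟨χ s, hχA s⟩ : ↥A))
  have hχeq : ∀ i < l, χ (b + a * i) = χ b := by
    intro i hi
    have h1 := hmono i (Finset.mem_range.mpr hi)
    have h2 := hmono 0 (Finset.mem_range.mpr hl)
    have h3 := congrArg Subtype.val (h1.trans h2.symm)
    simp only [smul_eq_mul] at h3
    rw [show b + a * i = a * i + b from by ring, h3]
    norm_num
  have hIset : ({W | a * (l - 1) + b < W} ∩ ⋂ i ∈ Finset.range l, {W | C W (b + a * i) = χ (b + a * i)}) ∈ U := by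
    apply Filter.inter_mem
    · have hfin : ({W : ℕ | ¬ a * (l - 1) + b < W}).Finite := by
        have : {W : ℕ | ¬ a * (l - 1) + b < W} = Set.Iic (a * (l - 1) + b) := by
          ext W; simp only [Set.mem_setOf_eq, Set.mem_Iic]; omega
        rw [this]; exact Set.finite_Iic _
      have := Filter.compl_mem_hyperfilter_of_finite hfin
      simpa [Set.compl_setOf] using this
    · rw [Filter.biInter_finset_mem]
      intro i _
      exact hχU (b + a * i)
  obtain ⟨W, hW1, hW2⟩ := Ultrafilter.nonempty_of_mem hIset
  obtain ⟨i, hil, hine⟩ := hbad W a ha b hW1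
  apply hine
  have hCb : C W b = χ b := by
    have := (Set.mem_iInter₂.mp hW2) 0 (Finset.mem_range.mpr hl)
    simpa using this
  have hCi : C W (b + a * i) = χ (b + a * i) :=
    (Set.mem_iInter₂.mp hW2) i (Finset.mem_range.mpr hil)
  rw [hCi, hCb, hχeq i hil]

lemma key (Γ : Set ℂ) (hwsp : WSP Γ) :
    ∀ m : ℕ, ∃ L : ℕ, ∀ (z : ℂ) (d : ℤ), 0 < d →
      ¬ (∀ s : ℕ, s < L → (z + (s : ℂ) * (d : ℂ) ∈ SigmaPMC Γ m ∧
          z + (s : ℂ) * (d : ℂ) ≠ 0)) := by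
  intro m
  induction m with
  | zero =>
    refine ⟨1, fun z d hd h => ?_⟩
    obtain ⟨h1, h2⟩ := h 0 one_pos
    obtain ⟨kk, hkk, xx, -, hsum⟩ := h1
    have : kk = 0 := Nat.le_zero.mp hkk
    subst this
    apply h2
    rw [hsum]
    simp
  | succ m IH =>
    obtain ⟨L', hIH⟩ := IH
    classical
    set M := m + 1 with hM
    set l := L' + 2 with hldef
    -- WSP bounds
    have hNex : ∀ kk : ℕ, ∃ nn : ℕ, 1 ≤ kk → ∀ r : ℤ, 0 < r →
        (SolSet Γ kk r).Finite ∧ (SolSet Γ kk r).ncard ≤ nn := by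
      intro kk
      by_cases h : 1 ≤ kk
      · obtain ⟨nn, hn⟩ := hwsp kk h; exact ⟨nn, fun _ => hn⟩
      · exact ⟨0, fun h' => absurd h' h⟩
    choose N hNs using hNex
    set Nmax := (Finset.Icc 1 (2 * M)).sup N with hNmaxdef
    set A : Set (ℕ × ℕ × Finset ℕ × ℕ) :=
      {p | p.1 ≤ M ∧ p.2.1 ≤ M ∧ p.2.2.1 ⊆ Finset.range (2 * M) ∧ p.2.2.2 ≤ Nmax} with hAdef
    have hAfin : A.Finite := by
      apply Set.Finite.subset (Set.Finite.prod (Set.finite_Iic M)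
        (Set.Finite.prod (Set.finite_Iic M) (Set.Finite.prod
          (((Finset.range (2 * M)).powerset : Finset (Finset ℕ)).finite_toSet)
          (Set.finite_Iic Nmax))))
      rintro ⟨p1, p2, p3, p4⟩ ⟨h1, h2, h3, h4⟩
      exact ⟨h1, h2, Finset.mem_coe.mpr (Finset.mem_powerset.mpr h3), h4⟩
    obtain ⟨W, hW⟩ := fvdw A hAfin l
    refine ⟨W + 1, fun z d hd hall => ?_⟩
    have hdC : (d : ℂ) ≠ 0 := Int.cast_ne_zero.mpr (ne_of_gt hd)
    -- choose good representations
    have hrep : ∀ s : ℕ, ∃ (kk : ℕ) (xx : ℕ → ℂ), s < W + 1 →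
        (1 ≤ kk ∧ kk ≤ M ∧ (∀ i < kk, xx i ∈ pmSet Γ) ∧
         (∑ i ∈ Finset.range kk, xx i = z + (s : ℂ) * (d : ℂ)) ∧
         ∀ T ⊆ Finset.range kk, T.Nonempty → ∑ i ∈ T, xx i ≠ 0) := by
      intro s
      by_cases hs : s < W + 1
      · obtain ⟨hmem, hne⟩ := hall s hs
        obtain ⟨kk, h1, h2, xx, h3, h4, h5⟩ := exists_goodRep hmem hne
        exact ⟨kk, xx, fun _ => ⟨h1, h2, h3, h4, h5⟩⟩
      · exact ⟨1, fun _ => 0, fun h => absurd h hs⟩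
    choose k x hkx using hrep
    -- the combined difference representation
    set c : ℕ → ℕ → ℂ :=
      fun s i => if i < k (s+1) then x (s+1) i else -(x s (i - k (s+1))) with hcdef
    have hcfirst : ∀ s, ∀ i ∈ Finset.range (k (s+1)), c s i = x (s+1) i := by
      intro s i hi
      simp only [hcdef]
      rw [if_pos (Finset.mem_range.mp hi)]
    have hcsum : ∀ s, s + 1 < W + 1 →
        ∑ i ∈ Finset.range (k (s+1) + k s), c s i = (d : ℂ) := by
      intro s hs1
      have hs : s < W + 1 := by omega
      obtain ⟨-, -, -, hsum1, -⟩ := hkx (s+1) hs1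
      obtain ⟨-, -, -, hsum2, -⟩ := hkx s hs
      rw [Finset.sum_range_add]
      have e1 : ∑ i ∈ Finset.range (k (s+1)), c s i = z + ((s+1 : ℕ) : ℂ) * d := by
        rw [Finset.sum_congr rfl (hcfirst s), hsum1]
      have e2 : ∑ i ∈ Finset.range (k s), c s (k (s+1) + i) = -(z + (s : ℂ) * d) := by
        have hterm : ∀ i ∈ Finset.range (k s), c s (k (s+1) + i) = -(x s i) := by
          intro i _
          simp only [hcdef]
          rw [if_neg (by omega)]
          congr 2
          omega
        rw [Finset.sum_congr rfl hterm, Finset.sum_neg_distrib, hsum2]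
      rw [e1, e2]
      push_cast
      ring
    -- extract irreducible subsolutions
    have hSex : ∀ s : ℕ, ∃ S : Finset ℕ, s + 1 < W + 1 →
        (S ⊆ Finset.range (k (s+1) + k s) ∧ (∑ i ∈ S, c s i = (d : ℂ)) ∧
         ∀ T ⊆ S, T.Nonempty → T ≠ S → ∑ i ∈ T, c s i ≠ 0) := by
      intro s
      by_cases hs : s + 1 < W + 1
      · obtain ⟨S, h1, h2, h3⟩ := exists_min_subsum _ (c s) _ (hcsum s hs)
        exact ⟨S, fun _ => ⟨h1, h2, h3⟩⟩
      · exact ⟨∅, fun h => absurd h hs⟩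
    choose S hS using hSex
    set g : ℕ → ℕ → ℂ := fun s i => if i ∈ S s then c s i else 0 with hgdef
    set 𝒢 : Finset ℕ → Set (ℕ → ℂ) := fun T =>
      {y : ℕ → ℂ | (∀ i ∈ T, y i ∈ pmSet Γ) ∧ (∀ i ∉ T, y i = 0) ∧
        (∑ i ∈ T, y i = (d : ℂ)) ∧
        ∀ T' ⊆ T, T'.Nonempty → T' ≠ T → ∑ i ∈ T', y i ≠ 0} with h𝒢def
    have hGfin : ∀ T : Finset ℕ, 1 ≤ T.card → T.card ≤ 2 * M →
        (𝒢 T).Finite ∧ (𝒢 T).ncard ≤ Nmax := by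
      intro T h1 h2
      have hsol := hNs T.card h1 d hd
      have hle : N T.card ≤ Nmax := Finset.le_sup (Finset.mem_Icc.mpr ⟨h1, h2⟩)
      exact placed_finite Γ d T Nmax hsol.1 (hsol.2.trans hle)
    -- index of a placed solution
    set idx : Finset ℕ → (ℕ → ℂ) → ℕ := fun T y =>
      if h : (𝒢 T).Finite ∧ y ∈ 𝒢 T then
        (h.1.toFinset.equivFin ⟨y, h.1.mem_toFinset.mpr h.2⟩).val
      else 0 with hidxdef
    have hidx_lt : ∀ T y, (hf : (𝒢 T).Finite) → y ∈ 𝒢 T → idx T y < (𝒢 T).ncard := by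
      intro T y hf hy
      rw [hidxdef]
      simp only
      rw [dif_pos ⟨hf, hy⟩]
      rw [Set.ncard_eq_toFinset_card _ hf]
      exact (hf.toFinset.equivFin _).isLt
    have hidx_inj : ∀ T y y', (𝒢 T).Finite → y ∈ 𝒢 T → y' ∈ 𝒢 T →
        idx T y = idx T y' → y = y' := by
      intro T y y' hf hy hy' heq
      rw [hidxdef] at heq
      simp only at heq
      rw [dif_pos ⟨hf, hy⟩, dif_pos ⟨hf, hy'⟩] at heq
      have h2 := (hf.toFinset.equivFin).injective (Fin.val_injective heq)
      exact congrArg Subtype.val h2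
    -- facts about g and S
    have hcmem : ∀ s, s + 1 < W + 1 →
        ∀ i ∈ Finset.range (k (s+1) + k s), c s i ∈ pmSet Γ := by
      intro s hs1 i hi
      have hs : s < W + 1 := by omega
      have hi' := Finset.mem_range.mp hi
      by_cases h : i < k (s+1)
      · simp only [hcdef]; rw [if_pos h]
        exact (hkx (s+1) hs1).2.2.1 i h
      · simp only [hcdef]; rw [if_neg h]
        exact pm_neg ((hkx s hs).2.2.1 (i - k (s+1)) (by omega))
    have hgG : ∀ s, s + 1 < W + 1 → g s ∈ 𝒢 (S s) := by
      intro s hs1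
      obtain ⟨hSsub, hSsum, hSmin⟩ := hS s hs1
      refine ⟨?_, ?_, ?_, ?_⟩
      · intro i hi
        simp only [hgdef]; rw [if_pos hi]
        exact hcmem s hs1 i (hSsub hi)
      · intro i hi
        simp only [hgdef]; rw [if_neg hi]
      · rw [Finset.sum_congr rfl (fun i hi => by simp only [hgdef]; rw [if_pos hi])]
        exact hSsum
      · intro T' hT' h1 h2
        rw [Finset.sum_congr rfl (fun i hi => by simp only [hgdef]; rw [if_pos (hT' hi)])]
        exact hSmin T' hT' h1 h2
    have hSne : ∀ s, s + 1 < W + 1 → (S s).Nonempty := by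
      intro s hs1
      exact Finset.nonempty_of_sum_ne_zero (by rw [(hS s hs1).2.1]; exact hdC)
    have hScard : ∀ s, s + 1 < W + 1 → 1 ≤ (S s).card ∧ (S s).card ≤ 2 * M := by
      intro s hs1
      have hs : s < W + 1 := by omega
      constructor
      · exact Finset.card_pos.mpr (hSne s hs1)
      · calc (S s).card ≤ (Finset.range (k (s+1) + k s)).card :=
              Finset.card_le_card (hS s hs1).1
          _ = k (s+1) + k s := Finset.card_range _
          _ ≤ 2 * M := by
              have := (hkx (s+1) hs1).2.1
              have := (hkx s hs).2.1
              omega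
    -- the coloring
    set CC : ℕ → ℕ × ℕ × Finset ℕ × ℕ := fun s =>
      if s + 1 < W + 1 then (k s, k (s+1), S s, idx (S s) (g s)) else (0, 0, ∅, 0) with hCCdef
    have hCCA : ∀ i, CC i ∈ A := by
      intro s
      simp only [hCCdef]
      split_ifs with hs1
      · have hs : s < W + 1 := by omega
        refine ⟨(hkx s hs).2.1, (hkx (s+1) hs1).2.1, ?_, ?_⟩
        · refine (hS s hs1).1.trans (Finset.range_subset_range.mpr ?_)
          have := (hkx (s+1) hs1).2.1
          have := (hkx s hs).2.1
          omega
        · obtain ⟨h1, h2⟩ := hScard s hs1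
          obtain ⟨hf, hn⟩ := hGfin (S s) h1 h2
          exact le_trans (le_of_lt (hidx_lt (S s) (g s) hf (hgG s hs1))) hn
      · exact ⟨Nat.zero_le _, Nat.zero_le _, Finset.empty_subset _, Nat.zero_le _⟩
    obtain ⟨a, ha, b, hlt, hmonoc⟩ := hW CC hCCA
    -- window bounds
    have hsW : ∀ i, i < l → b + a * i + 1 < W + 1 := by
      intro i hi
      have h1 : a * i ≤ a * (l - 1) := Nat.mul_le_mul_left a (by omega)
      omega
    have hb1 : b + 1 < W + 1 := by
      have := hsW 0 (by omega)
      omega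
    -- unpack color equalities
    have hceq : ∀ i, i < l →
        k (b + a * i) = k b ∧ k (b + a * i + 1) = k (b + 1) ∧
        S (b + a * i) = S b ∧
        idx (S (b + a * i)) (g (b + a * i)) = idx (S b) (g b) := by
      intro i hi
      have h1 := hmonoc i hi
      rw [hCCdef] at h1
      simp only at h1
      rw [if_pos (hsW i hi), if_pos hb1] at h1
      simp only [Prod.mk.injEq] at h1
      exact ⟨h1.1, h1.2.1, h1.2.2.1, h1.2.2.2⟩
    have hgeq : ∀ i, i < l → g (b + a * i) = g b := by
      intro i hi
      obtain ⟨-, -, hSeq, hidxeq⟩ := hceq i hi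
      obtain ⟨h1c, h2c⟩ := hScard b hb1
      have hfin := (hGfin (S b) h1c h2c).1
      have hg1 : g (b + a * i) ∈ 𝒢 (S b) := hSeq ▸ hgG (b + a * i) (hsW i hi)
      have hg2 : g b ∈ 𝒢 (S b) := hgG b hb1
      rw [hSeq] at hidxeq
      exact hidx_inj (S b) _ _ hfin hg1 hg2 hidxeq
    -- abbreviations
    have hgc : ∀ i, i < l → ∀ j ∈ S b, c (b + a * i) j = g b j := by
      intro i hi j hj
      have hSeq := (hceq i hi).2.2.1
      have : g (b + a * i) j = c (b + a * i) j := by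
        simp only [hgdef]; rw [if_pos (hSeq ▸ hj)]
      rw [← this, hgeq i hi]
    -- sums of the two blocks, for each i < l
    have hxsum1 : ∀ i, i < l → ∑ j ∈ Finset.range (k (b+1)), x (b + a * i + 1) j
        = z + ((b + a * i + 1 : ℕ) : ℂ) * d := by
      intro i hi
      have h := (hkx (b + a * i + 1) (hsW i hi)).2.2.2.1
      rw [← (hceq i hi).2.1]
      exact h
    have hxsum2 : ∀ i, i < l → ∑ j ∈ Finset.range (k b), x (b + a * i) j
        = z + ((b + a * i : ℕ) : ℂ) * d := by
      intro i hi
      have hs : b + a * i < W + 1 := by have := hsW i hi; omega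
      have h := (hkx (b + a * i) hs).2.2.2.1
      rw [← (hceq i hi).1]
      exact h
    have hcSS : ∀ i, i < l → ∑ j ∈ S b, c (b + a * i) j = (d : ℂ) := by
      intro i hi
      have h := (hS (b + a * i) (hsW i hi)).2.1
      rw [← (hceq i hi).2.2.1]
      exact h
    have hcfirsti : ∀ i, i < l → ∀ j ∈ Finset.range (k (b+1)),
        c (b + a * i) j = x (b + a * i + 1) j := by
      intro i hi j hj
      have := hcfirst (b + a * i) j (by rw [(hceq i hi).2.1]; exact hj)
      exact this
    have hcsecondi : ∀ i, i < l → ∀ j, k (b+1) ≤ j →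
        c (b + a * i) j = -(x (b + a * i) (j - k (b+1))) := by
      intro i hi j hj
      simp only [hcdef]
      rw [(hceq i hi).2.1, if_neg (by omega)]
    have hSsub : S b ⊆ Finset.range (k (b+1) + k b) := (hS b hb1).1
    have hK1pos : 1 ≤ k (b+1) := (hkx (b+1) hb1).1
    have hK2pos : 1 ≤ k b := (hkx b (by omega)).1
    -- case A : S b is everything
    by_cases hSA : S b = Finset.range (k (b+1) + k b)
    · have h1l : 1 < l := by omega
      have hxeq : ∀ j' ∈ Finset.range (k b), x (b + a * 1) j' = x b j' := by
        intro j' hj'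
        have hj'2 := Finset.mem_range.mp hj'
        have hjS : k (b+1) + j' ∈ S b := by
          rw [hSA]; exact Finset.mem_range.mpr (by omega)
        have e1 := hgc 1 h1l (k (b+1) + j') hjS
        have e0 := hgc 0 (by omega) (k (b+1) + j') hjS
        rw [hcsecondi 1 h1l _ (by omega)] at e1
        rw [hcsecondi 0 (by omega) _ (by omega)] at e0
        simp only [Nat.add_sub_cancel_left, mul_one, Nat.mul_zero, Nat.add_zero] at e1 e0
        have := e1.trans e0.symm
        simpa using this
      have hs1 := hxsum2 1 h1l
      have hs0 := hxsum2 0 (by omega)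
      simp only [Nat.mul_zero, Nat.add_zero] at hs0
      have hss : ∑ j ∈ Finset.range (k b), x (b + a * 1) j
          = ∑ j ∈ Finset.range (k b), x b j := Finset.sum_congr rfl hxeq
      have hmul : ((b + a * 1 : ℕ) : ℂ) * d = ((b : ℕ) : ℂ) * d := by
        linear_combination hs0 + hss - hs1
      have h2 : ((b + a * 1 : ℕ) : ℂ) = ((b : ℕ) : ℂ) := mul_right_cancel₀ hdC hmul
      have h3 : b + a * 1 = b := Nat.cast_inj.mp h2
      omega
    -- S b is a proper subset of the index range
    · have hCne : (Finset.range (k (b+1) + k b) \ S b).Nonempty := by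
        rw [Finset.sdiff_nonempty]
        intro hsub
        exact hSA (Finset.Subset.antisymm hSsub hsub)
      have hzero : ∑ j ∈ Finset.range (k (b+1) + k b) \ S b, c b j = 0 := by
        have h1 := Finset.sum_sdiff (f := c b) hSsub
        rw [(hS b hb1).2.1, hcsum b hb1] at h1
        linear_combination h1
      have hnotsub1 : ¬ (Finset.range (k (b+1)) ⊆ S b) := by
        intro hsub
        have hge : ∀ j ∈ Finset.range (k (b+1) + k b) \ S b, k (b+1) ≤ j := by
          intro j hj
          obtain ⟨hj1, hj2⟩ := Finset.mem_sdiff.mp hj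
          by_contra h
          exact hj2 (hsub (Finset.mem_range.mpr (by omega)))
        set T'' := (Finset.range (k (b+1) + k b) \ S b).image (fun j => j - k (b+1)) with hT''
        have hinj : ∀ a' ∈ Finset.range (k (b+1) + k b) \ S b,
            ∀ b' ∈ Finset.range (k (b+1) + k b) \ S b,
            a' - k (b+1) = b' - k (b+1) → a' = b' := by
          intro a' ha' b' hb' h
          have := hge a' ha'
          have := hge b' hb'
          omega
        have hsum : ∑ j' ∈ T'', x b j' = 0 := by
          rw [hT'', Finset.sum_image hinj]
          have : ∀ j ∈ Finset.range (k (b+1) + k b) \ S b,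
              x b (j - k (b+1)) = -(c b j) := by
            intro j hj
            simp only [hcdef]
            rw [if_neg (by have := hge j hj; omega)]
            ring
          rw [Finset.sum_congr rfl this, Finset.sum_neg_distrib, hzero, neg_zero]
        apply (hkx b (by omega)).2.2.2.2 T'' ?_ (hCne.image _) hsum
        · intro j' hj'
          obtain ⟨j, hj, rfl⟩ := Finset.mem_image.mp hj'
          have h1 := Finset.mem_range.mp (Finset.mem_sdiff.mp hj).1
          have h2 := hge j hj
          exact Finset.mem_range.mpr (by omega)
      by_cases hB : (Finset.range (k (b+1)) ∩ S b).Nonempty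
      · -- Case B1 : reduce using the first block
        set Pc := Finset.range (k (b+1)) \ S b with hPcdef
        have hPcne : Pc.Nonempty := Finset.sdiff_nonempty.mpr hnotsub1
        have hPccard : Pc.card ≤ m := by
          have h1 := Finset.card_inter_add_card_sdiff (Finset.range (k (b+1))) (S b)
          have h2 : 1 ≤ (Finset.range (k (b+1)) ∩ S b).card := Finset.card_pos.mpr hB
          have h3 : k (b+1) ≤ M := (hkx (b+1) hb1).2.1
          rw [Finset.card_range, ← hPcdef] at h1
          omega
        set Bc := ∑ j ∈ Finset.range (k (b+1)) ∩ S b, g b j with hBcdef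
        have hkey : ∀ i, i < l → ∑ j ∈ Pc, x (b + a * i + 1) j
            = z + ((b + a * i + 1 : ℕ) : ℂ) * d - Bc := by
          intro i hi
          have hsplit := Finset.sum_inter_add_sum_sdiff (Finset.range (k (b+1))) (S b)
            (x (b + a * i + 1))
          have hBi : ∑ j ∈ Finset.range (k (b+1)) ∩ S b, x (b + a * i + 1) j = Bc := by
            rw [hBcdef]
            apply Finset.sum_congr rfl
            intro j hj
            obtain ⟨hj1, hj2⟩ := Finset.mem_inter.mp hj
            rw [← hgc i hi j hj2, hcfirsti i hi j hj1]
          have h4 : ∑ j ∈ Pc, x (b + a * i + 1) j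
              = (∑ j ∈ Finset.range (k (b+1)), x (b + a * i + 1) j) - Bc := by
            rw [← hsplit, hBi]; ring
          rw [h4, hxsum1 i hi]
        refine hIH (z + ((b + 1 : ℕ) : ℂ) * d - Bc) ((a : ℤ) * d)
          (mul_pos (by exact_mod_cast ha) hd) ?_
        intro t ht
        have htl : t < l := by omega
        have hterm : z + ((b + 1 : ℕ) : ℂ) * d - Bc + (t : ℂ) * (((a : ℤ) * d : ℤ) : ℂ)
            = ∑ j ∈ Pc, x (b + a * t + 1) j := by
          rw [hkey t htl]
          push_cast
          ring
        rw [hterm]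
        constructor
        · refine mem_sigma Pc _ hPccard ?_
          intro j hj
          have hj1 := Finset.mem_range.mp (Finset.mem_sdiff.mp hj).1
          apply (hkx (b + a * t + 1) (hsW t htl)).2.2.1
          rw [(hceq t htl).2.1]
          exact hj1
        · refine (hkx (b + a * t + 1) (hsW t htl)).2.2.2.2 Pc ?_ hPcne
          intro j hj
          rw [Finset.mem_range, (hceq t htl).2.1]
          exact Finset.mem_range.mp (Finset.mem_sdiff.mp hj).1
      · -- Case B2 : S b lives in the second block
        have hSS2 : ∀ j ∈ S b, k (b+1) ≤ j ∧ j < k (b+1) + k b := by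
          intro j hj
          have h1 := Finset.mem_range.mp (hSsub hj)
          refine ⟨?_, h1⟩
          by_contra h
          exact hB ⟨j, Finset.mem_inter.mpr ⟨Finset.mem_range.mpr (by omega), hj⟩⟩
        have hIco : S b ⊆ Finset.Ico (k (b+1)) (k (b+1) + k b) :=
          fun j hj => Finset.mem_Ico.mpr (hSS2 j hj)
        set Qc := Finset.Ico (k (b+1)) (k (b+1) + k b) \ S b with hQcdef
        have hQcne : Qc.Nonempty := by
          rw [Finset.sdiff_nonempty]
          intro hsub
          have hSeqIco : S b = Finset.Ico (k (b+1)) (k (b+1) + k b) :=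
            Finset.Subset.antisymm hIco hsub
          have hdiff : Finset.range (k (b+1) + k b) \ S b = Finset.range (k (b+1)) := by
            rw [hSeqIco]
            ext j
            simp only [Finset.mem_sdiff, Finset.mem_range, Finset.mem_Ico]
            omega
          rw [hdiff] at hzero
          have hz2 : ∑ j ∈ Finset.range (k (b+1)), x (b+1) j = 0 := by
            rw [← Finset.sum_congr rfl (hcfirst b)]
            exact hzero
          exact (hkx (b+1) hb1).2.2.2.2 (Finset.range (k (b+1))) (fun j hj => hj)
            ⟨0, Finset.mem_range.mpr (by omega)⟩ hz2
        have hgeQ : ∀ j ∈ Qc, k (b+1) ≤ j ∧ j < k (b+1) + k b := by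
          intro j hj
          exact Finset.mem_Ico.mp (Finset.mem_sdiff.mp hj).1
        set T'' := Qc.image (fun j => j - k (b+1)) with hT''def
        have hinjQ : ∀ a' ∈ Qc, ∀ b' ∈ Qc, a' - k (b+1) = b' - k (b+1) → a' = b' := by
          intro a' ha' b' hb' h
          have h1 := (hgeQ a' ha').1
          have h2 := (hgeQ b' hb').1
          omega
        have hT''sub : T'' ⊆ Finset.range (k b) := by
          intro j' hj'
          obtain ⟨j, hj, rfl⟩ := Finset.mem_image.mp hj'
          have := hgeQ j hj
          exact Finset.mem_range.mpr (by omega)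
        have hT''ne : T''.Nonempty := hQcne.image _
        have hT''card : T''.card ≤ m := by
          have h1 : T''.card = Qc.card := Finset.card_image_of_injOn hinjQ
          have h2 : Qc.card = (Finset.Ico (k (b+1)) (k (b+1) + k b)).card - (S b).card := by
            rw [hQcdef, Finset.card_sdiff_of_subset hIco]
          have h3 : (Finset.Ico (k (b+1)) (k (b+1) + k b)).card = k b := by
            rw [Nat.card_Ico]; omega
          have h4 : 1 ≤ (S b).card := (hScard b hb1).1
          have h5 : k b ≤ M := (hkx b (by omega)).2.1
          omega
        have hkey : ∀ i, i < l → ∑ j' ∈ T'', x (b + a * i) j'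
            = z + ((b + a * i + 1 : ℕ) : ℂ) * d := by
          intro i hi
          have hcr : ∑ j ∈ Finset.range (k (b+1) + k b), c (b + a * i) j = (d : ℂ) := by
            have h := hcsum (b + a * i) (hsW i hi)
            rw [(hceq i hi).2.1, (hceq i hi).1] at h
            exact h
          have hfirst : ∑ j ∈ Finset.range (k (b+1)), c (b + a * i) j
              = z + ((b + a * i + 1 : ℕ) : ℂ) * d := by
            rw [Finset.sum_congr rfl (hcfirsti i hi), hxsum1 i hi]
          have hcons := Finset.sum_Ico_consecutive (c (b + a * i))
            (Nat.zero_le (k (b+1))) (Nat.le_add_right (k (b+1)) (k b))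
          rw [← Finset.range_eq_Ico, ← Finset.range_eq_Ico] at hcons
          have hIcosum : ∑ j ∈ Finset.Ico (k (b+1)) (k (b+1) + k b), c (b + a * i) j
              = (d : ℂ) - (z + ((b + a * i + 1 : ℕ) : ℂ) * d) := by
            linear_combination hcons + hcr - hfirst
          have hsd := Finset.sum_sdiff (f := c (b + a * i)) hIco
          rw [← hQcdef] at hsd
          have h5 := hcSS i hi
          have hQsum : ∑ j ∈ Qc, c (b + a * i) j
              = -(z + ((b + a * i + 1 : ℕ) : ℂ) * d) := by
            linear_combination hsd - h5 + hIcosum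
          rw [hT''def, Finset.sum_image hinjQ]
          have hneg : ∀ j ∈ Qc, x (b + a * i) (j - k (b+1)) = -(c (b + a * i) j) := by
            intro j hj
            rw [hcsecondi i hi j (hgeQ j hj).1]
            ring
          rw [Finset.sum_congr rfl hneg, Finset.sum_neg_distrib, hQsum]
          ring
        refine hIH (z + ((b + 1 : ℕ) : ℂ) * d) ((a : ℤ) * d)
          (mul_pos (by exact_mod_cast ha) hd) ?_
        intro t ht
        have htl : t < l := by omega
        have hsWt : b + a * t < W + 1 := by
          have := hsW t htl; omega
        have hterm : z + ((b + 1 : ℕ) : ℂ) * d + (t : ℂ) * (((a : ℤ) * d : ℤ) : ℂ)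
            = ∑ j' ∈ T'', x (b + a * t) j' := by
          rw [hkey t htl]
          push_cast
          ring
        rw [hterm]
        constructor
        · refine mem_sigma T'' _ hT''card ?_
          intro j' hj'
          have hj'2 := Finset.mem_range.mp (hT''sub hj')
          apply (hkx (b + a * t) hsWt).2.2.1
          rw [(hceq t htl).1]
          exact hj'2
        · refine (hkx (b + a * t) hsWt).2.2.2.2 T'' ?_ hT''ne
          intro j' hj'
          rw [Finset.mem_range, (hceq t htl).1]
          exact Finset.mem_range.mp (hT''sub hj')

end Auxiliary

/-- If `Γ ⊆ ℂ*` has the weighted sum property then for every `n ≥ 1`, `Σ_n(±Γ)` does not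
contain arbitrarily long arithmetic progressions with positive integer common difference. -/
theorem stmt12 (Γ : Set ℂ) (h0 : (0 : ℂ) ∉ Γ) (hwsp : WSP Γ) (n : ℕ) (hn : 1 ≤ n) :
    ∃ L : ℕ, ¬ ∃ (z : ℂ) (d : ℤ), 0 < d ∧
      ∀ s : ℕ, s < L → z + (s : ℂ) * (d : ℂ) ∈ SigmaPMC Γ n := by
  obtain ⟨L, hkey⟩ := key Γ hwsp n
  refine ⟨2 * L + 2, ?_⟩
  rintro ⟨z, d, hd, hAP⟩
  have hdC : (d : ℂ) ≠ 0 := Int.cast_ne_zero.mpr (ne_of_gt hd)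
  by_cases h1 : ∀ s : ℕ, s < L → z + (s : ℂ) * (d : ℂ) ≠ 0
  · exact hkey z d hd (fun s hs => ⟨hAP s (by omega), h1 s hs⟩)
  · push_neg at h1
    obtain ⟨s₀, hs₀, hz0⟩ := h1
    apply hkey (z + ((L + 1 : ℕ) : ℂ) * d) d hd
    intro s hs
    have harith : z + ((L + 1 : ℕ) : ℂ) * d + (s : ℂ) * (d : ℂ)
        = z + ((L + 1 + s : ℕ) : ℂ) * d := by
      push_cast
      ring
    constructor
    · rw [harith]
      exact hAP (L + 1 + s) (by omega)
    · rw [harith]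
      intro h
      have h3 : ((L + 1 + s : ℕ) : ℂ) * d = ((s₀ : ℕ) : ℂ) * d := by
        linear_combination h - hz0
      have h2 : ((L + 1 + s : ℕ) : ℂ) = ((s₀ : ℕ) : ℂ) := mul_right_cancel₀ hdC h3
      have h4 : L + 1 + s = s₀ := Nat.cast_inj.mp h2
      omega
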